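/- Let V be a nonempty finite subset of R^n, W a nonempty finite subset of R^n \ {0}, L = conv(V) + cone(W), f ∈ int(L), and L_t = conv(V ∪ (f + tW)) for t ∈ N. Then the intersection over all t of the polar sets (L_t − f)° equals (L − f)°. -/

import Mathlib

open Pointwise

/-- The convex conic hull of a finite set `W`: all nonnegative combinations. -/
def coneHull (n : ℕ) (W : Finset (EuclideanSpace ℝ (Fin n))) :
    Set (EuclideanSpace ℝ (Fin n)) :=
  {x | ∃ c : EuclideanSpace ℝ (Fin n) → ℝ, (∀ w, 0 ≤ c w) ∧ x = ∑ w ∈ W, c w • w}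

/-- The polar of a set. -/
def polarSet {n : ℕ} (X : Set (EuclideanSpace ℝ (Fin n))) : Set (EuclideanSpace ℝ (Fin n)) :=
  {u | ∀ x ∈ X, (inner ℝ (u) (x) : ℝ) ≤ 1}

lemma coneHull_convex (n : ℕ) (W : Finset (EuclideanSpace ℝ (Fin n))) :
    Convex ℝ (coneHull n W) := by
  rintro x ⟨c, hc, rfl⟩ y ⟨d, hd, rfl⟩ a b ha hb hab
  refine ⟨fun w => a * c w + b * d w, fun w =>
    add_nonneg (mul_nonneg ha (hc w)) (mul_nonneg hb (hd w)), ?_⟩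
  simp [Finset.smul_sum, smul_smul, add_smul, Finset.sum_add_distrib]

lemma zero_mem_coneHull (n : ℕ) (W : Finset (EuclideanSpace ℝ (Fin n))) :
    (0 : EuclideanSpace ℝ (Fin n)) ∈ coneHull n W :=
  ⟨fun _ => 0, fun _ => le_rfl, by simp⟩

lemma add_smul_mem_coneHull (n : ℕ) (W : Finset (EuclideanSpace ℝ (Fin n)))
    {c : EuclideanSpace ℝ (Fin n)} (hc : c ∈ coneHull n W)
    {w : EuclideanSpace ℝ (Fin n)} (hw : w ∈ W) {t : ℝ} (ht : 0 ≤ t) :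
    c + t • w ∈ coneHull n W := by
  classical
  obtain ⟨c0, hc0, rfl⟩ := hc
  refine ⟨fun w' => c0 w' + (if w' = w then t else 0), fun w' => by
    dsimp only; split <;> [linarith [hc0 w']; simpa using hc0 w'], ?_⟩
  rw [Finset.sum_congr rfl (fun w' _ => add_smul (c0 w') _ w'), Finset.sum_add_distrib]
  congr 1
  rw [Finset.sum_congr rfl (fun w' (_ : w' ∈ W) => by rw [ite_smul, zero_smul]),
    Finset.sum_ite_eq' W w (fun w' => t • w'), if_pos hw]

/-- The intersection over all `t ≥ 1` of the polars `(L_t - f)°` equals `(L - f)°`, where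
`L = conv(V) + cone(W)` and `L_t = conv(V ∪ (f + tW))`. -/
theorem iInter_polar_Lt_eq (n : ℕ) (V W : Finset (EuclideanSpace ℝ (Fin n)))
    (hV : V.Nonempty) (hW : W.Nonempty) (hW0 : (0 : EuclideanSpace ℝ (Fin n)) ∉ W)
    (f : EuclideanSpace ℝ (Fin n))
    (hf : f ∈ interior (convexHull ℝ (V : Set (EuclideanSpace ℝ (Fin n))) + coneHull n W)) :
    (⋂ (t : ℕ) (_ : 1 ≤ t),
        polarSet ((· - f) '' convexHull ℝ
          ((V : Set (EuclideanSpace ℝ (Fin n))) ∪ ((fun w => f + (t : ℝ) • w) '' W)))) =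
      polarSet ((· - f) ''
        (convexHull ℝ (V : Set (EuclideanSpace ℝ (Fin n))) + coneHull n W)) := by
  set S : Set (EuclideanSpace ℝ (Fin n)) := (V : Set (EuclideanSpace ℝ (Fin n)))
  have hLconv : Convex ℝ (convexHull ℝ S + coneHull n W) :=
    (convex_convexHull ℝ S).add (coneHull_convex n W)
  have hfL : f ∈ convexHull ℝ S + coneHull n W := interior_subset hf
  ext u
  simp only [Set.mem_iInter, polarSet, Set.mem_setOf_eq]
  constructor
  · intro hu
    have hV1 : ∀ v ∈ convexHull ℝ S, (inner ℝ u (v - f) : ℝ) ≤ 1 := by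
      have hsub : convexHull ℝ S ⊆
          {x : EuclideanSpace ℝ (Fin n) | (inner ℝ u x : ℝ) ≤ 1 + inner ℝ u f} := by
        apply convexHull_min
        · intro v hv
          have := hu 1 le_rfl (v - f) ⟨v, convexHull_mono Set.subset_union_left
            (subset_convexHull ℝ S hv), rfl⟩
          simp only [Set.mem_setOf_eq]
          rw [inner_sub_right] at this
          linarith
        · exact convex_halfSpace_le
            ⟨fun a b => inner_add_right u a b, fun r a => real_inner_smul_right u a r⟩ _
      intro v hv
      have := hsub hv
      rw [inner_sub_right]
      simp only [Set.mem_setOf_eq] at this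
      linarith
    have hWle : ∀ w ∈ W, (inner ℝ u w : ℝ) ≤ 0 := by
      intro w hw
      by_contra h
      push_neg at h
      obtain ⟨t, ht⟩ := exists_nat_gt ((1 : ℝ) / inner ℝ u w)
      have key := hu (t + 1) (Nat.le_add_left 1 t) (f + ((t : ℝ) + 1) • w - f)
        ⟨f + ((t : ℝ) + 1) • w, subset_convexHull ℝ _
          (Set.mem_union_right _ ⟨w, hw, by push_cast; ring_nf⟩), rfl⟩
      rw [add_sub_cancel_left, real_inner_smul_right] at key
      have h1 : (1 : ℝ) / inner ℝ u w < (t : ℝ) + 1 := lt_of_lt_of_le ht (by linarith)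
      rw [div_lt_iff₀ h] at h1
      nlinarith
    intro x hx
    obtain ⟨y, hy, rfl⟩ := hx
    obtain ⟨v0, hv0, c0, hc0, rfl⟩ := Set.mem_add.mp hy
    have hcle : (inner ℝ u c0 : ℝ) ≤ 0 := by
      obtain ⟨d, hd, rfl⟩ := hc0
      rw [inner_sum]
      refine Finset.sum_nonpos fun w hw => ?_
      rw [real_inner_smul_right]
      exact mul_nonpos_of_nonneg_of_nonpos (hd w) (hWle w hw)
    have heq : v0 + c0 - f = (v0 - f) + c0 := by abel
    simp only
    rw [heq, inner_add_right]
    linarith [hV1 v0 hv0]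
  · intro hu t ht x hx
    obtain ⟨y, hy, rfl⟩ := hx
    apply hu
    refine ⟨y, ?_, rfl⟩
    have hsub : convexHull ℝ (S ∪ ((fun w => f + (t : ℝ) • w) '' W)) ⊆
        convexHull ℝ S + coneHull n W := by
      apply convexHull_min _ hLconv
      rintro z (hz | ⟨w, hw, rfl⟩)
      · exact Set.mem_add.mpr ⟨z, subset_convexHull ℝ S hz, 0, zero_mem_coneHull n W,
          add_zero z⟩
      · obtain ⟨v0, hv0, c0, hc0, rfl⟩ := Set.mem_add.mp hfL
        exact Set.mem_add.mpr ⟨v0, hv0, c0 + (t : ℝ) • w,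
          add_smul_mem_coneHull n W hc0 hw (by positivity), by abel⟩
    exact hsub hy
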